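/- A formula φ ∈ L is satisfiable for the class of consistent multi-agent belief models (CMABs) if and only if φ is satisfiable for the class of notional doxastic models (NDMs). -/

import Mathlib

namespace LDAPaper

/-- Formulas over atomic propositions `ℕ` and agents `Agt`.
`expbel i α` is the explicit belief operator `△ᵢ α`; `impbel i φ` is the implicit
belief operator `□ᵢ φ`. -/
inductive Frm (Agt : Type) : Type
  | atom : ℕ → Frm Agt
  | neg : Frm Agt → Frm Agt
  | and : Frm Agt → Frm Agt → Frm Agt
  | expbel : Agt → Frm Agt → Frm Agt
  | impbel : Agt → Frm Agt → Frm Agt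

namespace Frm

variable {Agt : Type}

/-- Membership in the sublanguage `L0` (no implicit-belief operator). -/
def isL0 : Frm Agt → Prop
  | atom _ => True
  | neg α => isL0 α
  | and α β => isL0 α ∧ isL0 β
  | expbel _ α => isL0 α
  | impbel _ _ => False

/-- Membership in the language `L`: the explicit belief operator applies only to
`L0`-formulas. -/
def isL : Frm Agt → Prop
  | atom _ => True
  | neg φ => isL φ
  | and φ ψ => isL φ ∧ isL ψ
  | expbel _ α => isL0 α
  | impbel _ φ => isL φ

/-- Material implication, defined from `¬` and `∧` as usual. -/
def imp (φ ψ : Frm Agt) : Frm Agt := neg (and φ (neg ψ))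

/-- Disjunction, defined from `¬` and `∧` as usual. -/
def or (φ ψ : Frm Agt) : Frm Agt := neg (and (neg φ) (neg ψ))

/-- Biconditional, defined from `¬` and `∧` as usual. -/
def iff (φ ψ : Frm Agt) : Frm Agt := and (imp φ ψ) (imp ψ φ)

/-- The set of atomic propositions occurring in a formula. -/
def atomsOf : Frm Agt → Set ℕ
  | atom p => {p}
  | neg φ => atomsOf φ
  | and φ ψ => atomsOf φ ∪ atomsOf ψ
  | expbel _ φ => atomsOf φ
  | impbel _ φ => atomsOf φ

end Frm

/-- A model `(W, D, N, V)`: worlds, doxastic function, notional function, valuation. -/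
structure PreNDM (Agt : Type) where
  W : Type
  D : Agt → W → Set (Frm Agt)
  N : Agt → W → Set W
  V : ℕ → Set W

namespace PreNDM

variable {Agt : Type}

/-- Truth of a formula at a world of a model. -/
def sat (M : PreNDM Agt) : M.W → Frm Agt → Prop
  | w, .atom p => w ∈ M.V p
  | w, .neg φ => ¬ sat M w φ
  | w, .and φ ψ => sat M w φ ∧ sat M w ψ
  | w, .expbel i α => α ∈ M.D i w
  | w, .impbel i φ => ∀ v ∈ M.N i w, sat M v φ

end PreNDM

/-- Quasi-notional doxastic model: belief bases consist of `L0`-formulas,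
(C1*) `N(i,w) ⊆ ∩_{α ∈ D(i,w)} ‖α‖`, and (C2) `N(i,w) ≠ ∅`. -/
def isQNDM {Agt : Type} (M : PreNDM Agt) : Prop :=
  (∀ i w, ∀ α ∈ M.D i w, α.isL0) ∧
  (∀ i w, ∀ v ∈ M.N i w, ∀ α ∈ M.D i w, M.sat v α) ∧
  (∀ i w, (M.N i w).Nonempty)

/-- Notional doxastic model: belief bases consist of `L0`-formulas,
(C1) `N(i,w) = ∩_{α ∈ D(i,w)} ‖α‖`, and (C2) `N(i,w) ≠ ∅`. -/
def isNDM {Agt : Type} (M : PreNDM Agt) : Prop :=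
  (∀ i w, ∀ α ∈ M.D i w, α.isL0) ∧
  (∀ i w, M.N i w = {v | ∀ α ∈ M.D i w, M.sat v α}) ∧
  (∀ i w, (M.N i w).Nonempty)

/-- A model is finite iff `W` is finite and every `D(i,w)` and every
`{p ∈ Atm : w ∈ V(p)}` is finite. -/
def finiteModel {Agt : Type} (M : PreNDM Agt) : Prop :=
  Finite M.W ∧ (∀ i w, (M.D i w).Finite) ∧ (∀ w, {p : ℕ | w ∈ M.V p}.Finite)

end LDAPaper
namespace LDAPaper

/-- A multi-agent belief base `B = (B_1,…,B_n, V)`. -/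
structure MABase (Agt : Type) where
  B : Agt → Set (Frm Agt)
  V : Set ℕ

namespace MABase

variable {Agt : Type}

/-- Satisfaction of `L0`-formulas by a multi-agent belief base. -/
def bsat (b : MABase Agt) : Frm Agt → Prop
  | .atom p => p ∈ b.V
  | .neg α => ¬ bsat b α
  | .and α β => bsat b α ∧ bsat b β
  | .expbel i α => α ∈ b.B i
  | .impbel _ _ => True

/-- Well-formedness: each agent's belief base consists of `L0`-formulas. -/
def wf (b : MABase Agt) : Prop := ∀ i, ∀ α ∈ b.B i, α.isL0

/-- Doxastic alternative relation: `b R_i b'` iff `b'` satisfies every formula in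
agent `i`'s belief base in `b`. -/
def R (i : Agt) (b b' : MABase Agt) : Prop := ∀ α ∈ b.B i, bsat b' α

end MABase

/-- Satisfaction of `L`-formulas by a multi-agent belief model `(b, Cxt)`. -/
def msat {Agt : Type} (Cxt : Set (MABase Agt)) : MABase Agt → Frm Agt → Prop
  | b, .atom p => p ∈ b.V
  | b, .neg φ => ¬ msat Cxt b φ
  | b, .and φ ψ => msat Cxt b φ ∧ msat Cxt b ψ
  | b, .expbel i α => α ∈ b.B i
  | b, .impbel i φ => ∀ b' ∈ Cxt, MABase.R i b b' → msat Cxt b' φ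

/-- Consistent multi-agent belief model: all bases involved are well formed and
for every agent `i` and every `b' ∈ Cxt ∪ {b}` there is `b'' ∈ Cxt` with `b' R_i b''`. -/
def isCMAB {Agt : Type} (b : MABase Agt) (Cxt : Set (MABase Agt)) : Prop :=
  (∀ b' ∈ insert b Cxt, b'.wf) ∧
  (∀ i : Agt, ∀ b' ∈ insert b Cxt, ∃ b'' ∈ Cxt, MABase.R i b' b'')

/-- Boolean evaluation of a formula, treating atoms, explicit-belief formulas and
implicit-belief formulas as propositional atoms. -/
def boolEval {Agt : Type} (v : Frm Agt → Bool) : Frm Agt → Bool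
  | .neg φ => ! boolEval v φ
  | .and φ ψ => boolEval v φ && boolEval v ψ
  | φ => v φ

/-- Instances of classical propositional tautologies. -/
def Tautology {Agt : Type} (φ : Frm Agt) : Prop :=
  ∀ v : Frm Agt → Bool, boolEval v φ = true

/-- Derivability in the logic LDA: classical propositional logic over `L` plus
axioms K, D, Int and the necessitation rule for implicit belief. -/
inductive LDA {Agt : Type} : Frm Agt → Prop
  | taut {φ : Frm Agt} : φ.isL → Tautology φ → LDA φ
  | axK (i : Agt) {φ ψ : Frm Agt} : φ.isL → ψ.isL →
      LDA (((Frm.impbel i φ).and (Frm.impbel i (φ.imp ψ))).imp (Frm.impbel i ψ))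
  | axD (i : Agt) {φ : Frm Agt} : φ.isL →
      LDA (Frm.neg ((Frm.impbel i φ).and (Frm.impbel i (Frm.neg φ))))
  | axInt (i : Agt) {α : Frm Agt} : α.isL0 →
      LDA ((Frm.expbel i α).imp (Frm.impbel i α))
  | mp {φ ψ : Frm Agt} : LDA (φ.imp ψ) → LDA φ → LDA ψ
  | nec (i : Agt) {φ : Frm Agt} : LDA φ → LDA (Frm.impbel i φ)

/-- Conjunction of a list of formulas (the empty conjunction is a tautology). -/
def conjList {Agt : Type} : List (Frm Agt) → Frm Agt
  | [] => Frm.neg ((Frm.atom 0).and (Frm.neg (Frm.atom 0)))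
  | φ :: l => φ.and (conjList l)

/-- A set of formulas is LDA-consistent iff no contradiction is derivable in LDA
from finitely many of its members. -/
def Consistent {Agt : Type} (Δ : Set (Frm Agt)) : Prop :=
  ∀ l : List (Frm Agt), (∀ ψ ∈ l, ψ ∈ Δ) → ¬ LDA (Frm.neg (conjList l))

/-- Maximally LDA-consistent set of `L`-formulas. -/
def MCS {Agt : Type} (Γ : Set (Frm Agt)) : Prop :=
  (∀ φ ∈ Γ, φ.isL) ∧ Consistent Γ ∧
    ∀ Δ : Set (Frm Agt), (∀ φ ∈ Δ, φ.isL) → Consistent Δ → Γ ⊆ Δ → Δ = Γ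

/-- Canonical doxastic function: `α ∈ D^c(i,w)` iff `△ᵢα ∈ w`. -/
def canonD {Agt : Type} (i : Agt) (w : {Γ : Set (Frm Agt) // MCS Γ}) : Set (Frm Agt) :=
  {α | Frm.expbel i α ∈ w.val}

/-- Canonical notional function: `v ∈ N^c(i,w)` iff `□ᵢφ ∈ w` implies `φ ∈ v`. -/
def canonN {Agt : Type} (i : Agt) (w : {Γ : Set (Frm Agt) // MCS Γ}) :
    Set {Γ : Set (Frm Agt) // MCS Γ} :=
  {v | ∀ φ : Frm Agt, Frm.impbel i φ ∈ w.val → φ ∈ v.val}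

/-- Canonical valuation: `w ∈ V^c(p)` iff `p ∈ w`. -/
def canonV {Agt : Type} (p : ℕ) : Set {Γ : Set (Frm Agt) // MCS Γ} :=
  {w | Frm.atom p ∈ w.val}

/-- The canonical model of LDA: worlds are the maximally LDA-consistent sets. -/
def canonM (Agt : Type) : PreNDM Agt where
  W := {Γ : Set (Frm Agt) // MCS Γ}
  D := canonD
  N := canonN
  V := canonV

/-- `w ≡_Σ v` iff `w` and `v` satisfy the same formulas of `Σ`. -/
def filtRel {Agt : Type} (M : PreNDM Agt) (S : Set (Frm Agt)) (w v : M.W) : Prop :=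
  ∀ φ ∈ S, (M.sat w φ ↔ M.sat v φ)

/-- The setoid of `≡_Σ`-equivalent worlds. -/
def filtSetoid {Agt : Type} (M : PreNDM Agt) (S : Set (Frm Agt)) : Setoid M.W where
  r := filtRel M S
  iseqv := ⟨fun _ _ _ => Iff.rfl, fun h φ hφ => (h φ hφ).symm,
    fun h1 h2 φ hφ => (h1 φ hφ).trans (h2 φ hφ)⟩

/-- The `≡_Σ`-equivalence class `|w|_Σ` of a world `w`. -/
def filtMk {Agt : Type} (M : PreNDM Agt) (S : Set (Frm Agt)) (w : M.W) :
    Quotient (filtSetoid M S) :=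
  Quotient.mk (filtSetoid M S) w

/-- Closure under subformulas. -/
def SubClosed {Agt : Type} (S : Set (Frm Agt)) : Prop :=
  (∀ φ : Frm Agt, Frm.neg φ ∈ S → φ ∈ S) ∧
  (∀ φ ψ : Frm Agt, Frm.and φ ψ ∈ S → φ ∈ S ∧ ψ ∈ S) ∧
  (∀ (i : Agt) (φ : Frm Agt), Frm.expbel i φ ∈ S → φ ∈ S) ∧
  (∀ (i : Agt) (φ : Frm Agt), Frm.impbel i φ ∈ S → φ ∈ S)

/-- The filtration `M_Σ = (W_Σ, D_Σ, N_Σ, V_Σ)` of `M` through `Σ`: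
`W_Σ` is the quotient of `W` by `≡_Σ`;
`D_Σ(i,|w|) = (∩_{v ∈ |w|} D(i,v)) ∩ Σ`;
`N_Σ(i,|w|) = {|v| : v ∈ N(i,w)}` (smallest filtration);
`V_Σ(p) = {|w| : (M,w) ⊨ p}` if `p` occurs in `Σ`, and `∅` otherwise. -/
def filtModel {Agt : Type} (M : PreNDM Agt) (S : Set (Frm Agt)) : PreNDM Agt where
  W := Quotient (filtSetoid M S)
  D := fun i x => {α | α ∈ S ∧ ∀ v : M.W, filtMk M S v = x → α ∈ M.D i v}
  N := fun i x => {y | ∃ w v : M.W, filtMk M S w = x ∧ filtMk M S v = y ∧ v ∈ M.N i w}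
  V := fun p =>
    {x | (∃ φ ∈ S, p ∈ φ.atomsOf) ∧ ∃ w : M.W, filtMk M S w = x ∧ M.sat w (Frm.atom p)}

/-- The language of Fagin & Halpern's logic of general awareness:
`bel` is implicit belief `B_i`, `aware` is awareness `A_i`, `expk` is explicit
belief `X_i`. -/
inductive LGA (Agt : Type) : Type
  | atom : ℕ → LGA Agt
  | neg : LGA Agt → LGA Agt
  | and : LGA Agt → LGA Agt → LGA Agt
  | bel : Agt → LGA Agt → LGA Agt
  | aware : Agt → LGA Agt → LGA Agt
  | expk : Agt → LGA Agt → LGA Agt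

/-- An awareness structure `(S, R_1,…,R_n, A_1,…,A_n, π)`. -/
structure AwStruct (Agt : Type) where
  S : Type
  R : Agt → S → S → Prop
  A : Agt → S → Set (LGA Agt)
  val : ℕ → Set S

namespace AwStruct

variable {Agt : Type}

/-- Truth in an awareness structure; `X_i φ` holds iff both `B_i φ` and `A_i φ` hold. -/
def sat (M : AwStruct Agt) : M.S → LGA Agt → Prop
  | s, .atom p => s ∈ M.val p
  | s, .neg φ => ¬ sat M s φ
  | s, .and φ ψ => sat M s φ ∧ sat M s ψ
  | s, .bel i φ => ∀ t, M.R i s t → sat M t φ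
  | s, .aware i φ => φ ∈ M.A i s
  | s, .expk i φ => (∀ t, M.R i s t → sat M t φ) ∧ φ ∈ M.A i s

/-- An awareness structure is serial iff every `R_i` is serial. -/
def serial (M : AwStruct Agt) : Prop := ∀ i s, ∃ t, M.R i s t

end AwStruct

/-- The translation `tr` from `L` to the language of general awareness. -/
def tr {Agt : Type} : Frm Agt → LGA Agt
  | .atom p => .atom p
  | .neg φ => .neg (tr φ)
  | .and φ ψ => .and (tr φ) (tr ψ)
  | .expbel i α => .expk i (tr α)
  | .impbel i φ => .bel i (tr φ)

end LDAPaper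

namespace LDAPaper

/-! ### Auxiliary development for `cmab_iff_ndm_sat` -/

section AuxSat

variable {Agt : Type}

/-- Size of a formula. -/
def fsize : Frm Agt → ℕ
  | .atom _ => 1
  | .neg α => fsize α + 1
  | .and α β => fsize α + fsize β + 1
  | .expbel _ α => fsize α + 1
  | .impbel _ α => fsize α + 1

lemma one_le_fsize (α : Frm Agt) : 1 ≤ fsize α := by
  cases α <;> simp [fsize]

/-- Duplication `α ↦ α ∧ α`. -/
def fdup (α : Frm Agt) : Frm Agt := α.and α

lemma fdup_inj : Function.Injective (fdup (Agt := Agt)) := by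
  intro a b h
  injection h

/-- Iterated duplication. -/
def ait (n : ℕ) (α : Frm Agt) : Frm Agt := fdup^[n] α

lemma ait_inj (n : ℕ) : Function.Injective (ait (Agt := Agt) n) :=
  fdup_inj.iterate n

lemma ait_succ (n : ℕ) (α : Frm Agt) : ait (n + 1) α = ait n (fdup α) := by
  simp [ait, Function.iterate_succ_apply]

lemma fsize_fdup (α : Frm Agt) : fsize (fdup α) = fsize α + fsize α + 1 := rfl

lemma le_fsize_ait (n : ℕ) (α : Frm Agt) : n + fsize α ≤ fsize (ait n α) := by
  induction n with
  | zero => simp [ait]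
  | succ k ih =>
      have : ait (k + 1) α = fdup (ait k α) := by
        simp [ait, Function.iterate_succ_apply']
      rw [this, fsize_fdup]
      have h1 := one_le_fsize (ait k α)
      omega

lemma isL0_ait {n : ℕ} {α : Frm Agt} (h : α.isL0) : (ait n α).isL0 := by
  induction n with
  | zero => simpa [ait]
  | succ k ih =>
      have : ait (k + 1) α = fdup (ait k α) := by
        simp [ait, Function.iterate_succ_apply']
      rw [this]
      exact ⟨ih, ih⟩

/-- The tautology `¬(γ ∧ ¬γ)` built from `γ`. -/
def taut0 (γ : Frm Agt) : Frm Agt := Frm.neg (Frm.and γ (Frm.neg γ))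

lemma taut0_inj : Function.Injective (taut0 (Agt := Agt)) := by
  intro a b h
  unfold taut0 at h
  injection h with h'
  injection h'

lemma sat_taut0 (M : PreNDM Agt) (w : M.W) (γ : Frm Agt) : M.sat w (taut0 γ) := by
  simp only [taut0, PreNDM.sat]
  tauto

lemma isL0_taut0 {γ : Frm Agt} (h : γ.isL0) : (taut0 γ).isL0 := ⟨h, h⟩

lemma le_fsize_taut0 (γ : Frm Agt) : fsize γ + 3 ≤ fsize (taut0 γ) := by
  simp only [taut0, fsize]
  omega

/-- Truth-marker formula for `α` (a tautology, injectively keyed by `α`). -/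
def gmark (K : ℕ) (α : Frm Agt) : Frm Agt := taut0 (ait (K + 2) α)

/-- Context-marker formula (a tautology). -/
def cmark (Agt : Type) (K : ℕ) : Frm Agt := taut0 (ait (K + 1) (Frm.atom 0))

lemma gmark_inj (K : ℕ) : Function.Injective (gmark (Agt := Agt) K) := by
  intro a b h
  exact ait_inj (K + 2) (taut0_inj h)

lemma gmark_ne_cmark (K : ℕ) (α : Frm Agt) : gmark K α ≠ cmark Agt K := by
  intro h
  have h1 : ait (K + 2) α = ait (K + 1) (Frm.atom 0) := taut0_inj h
  rw [show K + 2 = (K + 1) + 1 from rfl, ait_succ] at h1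
  have h2 : fdup α = Frm.atom 0 := ait_inj (K + 1) h1
  simp [fdup] at h2

lemma K_lt_fsize_gmark (K : ℕ) (α : Frm Agt) : K + 1 ≤ fsize (gmark K α) := by
  have h1 := le_fsize_ait (K + 2) α
  have h2 : fsize (ait (K + 2) α) + 3 ≤ fsize (gmark K α) := le_fsize_taut0 _
  have h3 := one_le_fsize α
  omega

lemma K_lt_fsize_cmark (K : ℕ) : K + 1 ≤ fsize (cmark Agt K) := by
  have h1 := le_fsize_ait (K + 1) (Frm.atom (Agt := Agt) 0)
  have h2 : fsize (ait (K + 1) (Frm.atom (Agt := Agt) 0)) + 3 ≤ fsize (cmark Agt K) :=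
    le_fsize_taut0 _
  have h3 : fsize (Frm.atom (Agt := Agt) 0) = 1 := rfl
  omega

lemma gmark_ne_expbel (K : ℕ) (α : Frm Agt) (i : Agt) (β : Frm Agt) :
    gmark K α ≠ Frm.expbel i β := by
  intro h; simp [gmark, taut0] at h

lemma cmark_ne_expbel (K : ℕ) (i : Agt) (β : Frm Agt) :
    cmark Agt K ≠ Frm.expbel i β := by
  intro h; simp [cmark, taut0] at h

/-- The augmented doxastic function used to turn a CMAB into an NDM. -/
def D' (i0 : Agt) (K : ℕ) (Cxt : Set (MABase Agt)) (i : Agt) (w : MABase Agt) :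
    Set (Frm Agt) :=
  {α | α ∈ w.B i ∧ fsize α < K} ∪
  {γ | ∃ α ∈ w.B i, γ = Frm.expbel i0 (gmark K α)} ∪
  {γ | γ = Frm.expbel i0 (cmark Agt K)} ∪
  {γ | i = i0 ∧ ((∃ α, α.isL0 ∧ w.bsat α ∧ γ = gmark K α) ∨ (w ∈ Cxt ∧ γ = cmark Agt K))}

lemma mem_D'_small {i0 : Agt} {K : ℕ} {Cxt : Set (MABase Agt)} {i : Agt}
    {w : MABase Agt} {β : Frm Agt} (hs : fsize β < K) :
    β ∈ D' i0 K Cxt i w ↔ β ∈ w.B i := by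
  constructor
  · rintro (((⟨h1, _⟩ | ⟨α, hα, rfl⟩) | rfl) | ⟨hi, (⟨α, _, _, rfl⟩ | ⟨_, rfl⟩)⟩)
    · exact h1
    · have h := K_lt_fsize_gmark K α
      have he : fsize (Frm.expbel i0 (gmark K α)) = fsize (gmark K α) + 1 := rfl
      omega
    · have h := K_lt_fsize_cmark (Agt := Agt) K
      have he : fsize (Frm.expbel i0 (cmark Agt K)) = fsize (cmark Agt K) + 1 := rfl
      omega
    · have := K_lt_fsize_gmark K α
      omega
    · have := K_lt_fsize_cmark (Agt := Agt) K
      omega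
  · intro h
    exact Or.inl (Or.inl (Or.inl ⟨h, hs⟩))

lemma mem_D'_gmark {i0 : Agt} {K : ℕ} {Cxt : Set (MABase Agt)} {i : Agt}
    {w : MABase Agt} {α : Frm Agt} (hα : α.isL0) :
    gmark K α ∈ D' i0 K Cxt i w ↔ (i = i0 ∧ w.bsat α) := by
  constructor
  · rintro (((⟨_, h2⟩ | ⟨β, _, heq⟩) | heq) | ⟨hi, (⟨β, _, hb, heq⟩ | ⟨_, heq⟩)⟩)
    · have := K_lt_fsize_gmark K α
      omega
    · exact absurd heq (gmark_ne_expbel K α i0 _)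
    · exact absurd heq (gmark_ne_expbel K α i0 _)
    · have := gmark_inj K heq
      subst this
      exact ⟨hi, hb⟩
    · exact absurd heq (gmark_ne_cmark K α)
  · rintro ⟨rfl, hb⟩
    exact Or.inr ⟨rfl, Or.inl ⟨α, hα, hb, rfl⟩⟩

lemma mem_D'_cmark {i0 : Agt} {K : ℕ} {Cxt : Set (MABase Agt)} {i : Agt}
    {w : MABase Agt} :
    cmark Agt K ∈ D' i0 K Cxt i w ↔ (i = i0 ∧ w ∈ Cxt) := by
  constructor
  · rintro (((⟨_, h2⟩ | ⟨β, _, heq⟩) | heq) | ⟨hi, (⟨β, _, _, heq⟩ | ⟨hc, _⟩)⟩)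
    · have := K_lt_fsize_cmark (Agt := Agt) K
      omega
    · exact absurd heq (cmark_ne_expbel K i0 _)
    · exact absurd heq (cmark_ne_expbel K i0 _)
    · exact absurd heq.symm (gmark_ne_cmark K β)
    · exact ⟨hi, hc⟩
  · rintro ⟨rfl, hc⟩
    exact Or.inr ⟨rfl, Or.inr ⟨hc, rfl⟩⟩

/-- The NDM built from a CMAB. -/
def M' (i0 : Agt) (K : ℕ) (b : MABase Agt) (Cxt : Set (MABase Agt)) : PreNDM Agt where
  W := {x : MABase Agt // x ∈ insert b Cxt}
  D := fun i v => D' i0 K Cxt i v.1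
  N := fun i v => {u | u.1 ∈ Cxt ∧ MABase.R i v.1 u.1}
  V := fun p => {v | p ∈ v.1.V}

/-- Truth of small `L0` formulas in `M'` agrees with base satisfaction. -/
lemma sat_small {i0 : Agt} {K : ℕ} {b : MABase Agt} {Cxt : Set (MABase Agt)} :
    ∀ α : Frm Agt, α.isL0 → fsize α ≤ K →
      ∀ u : (M' i0 K b Cxt).W, (M' i0 K b Cxt).sat u α ↔ u.1.bsat α := by
  intro α
  induction α with
  | atom p =>
      intro _ _ u
      simp [PreNDM.sat, MABase.bsat, M']
      exact Iff.rfl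
  | neg α ih =>
      intro hL hs u
      simp only [fsize] at hs
      simp only [PreNDM.sat, MABase.bsat]
      rw [ih hL (by omega) u]
  | and α β ih1 ih2 =>
      intro hL hs u
      simp only [fsize] at hs
      simp only [PreNDM.sat, MABase.bsat]
      rw [ih1 hL.1 (by omega) u, ih2 hL.2 (by omega) u]
  | expbel j β _ =>
      intro _ hs u
      simp only [fsize] at hs
      simp only [PreNDM.sat, MABase.bsat]
      exact mem_D'_small (by omega)
  | impbel j β _ =>
      intro hL _ _
      exact absurd hL id

/-- (C1) holds for `M'`: the notional sets are exactly the intersections. -/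
lemma N_char {i0 : Agt} {K : ℕ} {b : MABase Agt} {Cxt : Set (MABase Agt)}
    (hwf : ∀ x ∈ insert b Cxt, MABase.wf x) (i : Agt) (v : (M' i0 K b Cxt).W) :
    (M' i0 K b Cxt).N i v =
      {u | ∀ α ∈ (M' i0 K b Cxt).D i v, (M' i0 K b Cxt).sat u α} := by
  ext u
  constructor
  · rintro ⟨huC, huR⟩ α hα
    rcases hα with (((⟨h1, h2⟩ | ⟨β, hβ, rfl⟩) | rfl) | ⟨hi, (⟨β, hβL, _, rfl⟩ | ⟨_, rfl⟩)⟩)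
    · exact (sat_small α (hwf v.1 v.2 i α h1) (le_of_lt h2) u).mpr (huR α h1)
    · show gmark K β ∈ D' i0 K Cxt i0 u.1
      exact (mem_D'_gmark (hwf v.1 v.2 i β hβ)).mpr ⟨rfl, huR β hβ⟩
    · show cmark Agt K ∈ D' i0 K Cxt i0 u.1
      exact mem_D'_cmark.mpr ⟨rfl, huC⟩
    · exact sat_taut0 _ u _
    · exact sat_taut0 _ u _
  · intro h
    constructor
    · have h1 := h (Frm.expbel i0 (cmark Agt K)) (Or.inl (Or.inr rfl))
      have h2 : cmark Agt K ∈ D' i0 K Cxt i0 u.1 := h1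
      exact (mem_D'_cmark.mp h2).2
    · intro α hα
      have h1 := h (Frm.expbel i0 (gmark K α)) (Or.inl (Or.inl (Or.inr ⟨α, hα, rfl⟩)))
      have h2 : gmark K α ∈ D' i0 K Cxt i0 u.1 := h1
      exact ((mem_D'_gmark (hwf v.1 v.2 i α hα)).mp h2).2

/-- Truth of small `L` formulas in `M'` agrees with CMAB satisfaction. -/
lemma sat_main {i0 : Agt} {K : ℕ} {b : MABase Agt} {Cxt : Set (MABase Agt)} :
    ∀ ψ : Frm Agt, ψ.isL → fsize ψ ≤ K →
      ∀ v : (M' i0 K b Cxt).W, msat Cxt v.1 ψ ↔ (M' i0 K b Cxt).sat v ψ := by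
  intro ψ
  induction ψ with
  | atom p =>
      intro _ _ v
      simp [PreNDM.sat, msat, M']
      exact Iff.rfl
  | neg ψ ih =>
      intro hL hs v
      simp only [fsize] at hs
      simp only [PreNDM.sat, msat]
      rw [ih hL (by omega) v]
  | and ψ1 ψ2 ih1 ih2 =>
      intro hL hs v
      simp only [fsize] at hs
      simp only [PreNDM.sat, msat]
      rw [ih1 hL.1 (by omega) v, ih2 hL.2 (by omega) v]
  | expbel i α _ =>
      intro _ hs v
      simp only [fsize] at hs
      simp only [PreNDM.sat, msat]
      exact (mem_D'_small (by omega)).symm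
  | impbel i ψ ih =>
      intro hL hs v
      simp only [fsize] at hs
      simp only [PreNDM.sat, msat]
      constructor
      · rintro h u ⟨h1, h2⟩
        exact (ih hL (by omega) u).mp (h u.1 h1 h2)
      · intro h b' hb' hR
        exact (ih hL (by omega) ⟨b', Set.mem_insert_of_mem _ hb'⟩).mpr
          (h ⟨b', Set.mem_insert_of_mem _ hb'⟩ ⟨hb', hR⟩)

/-- The one-world model used when the agent set is empty. -/
def unitModel (b : MABase Agt) [IsEmpty Agt] : PreNDM Agt where
  W := Unit
  D := fun i _ => isEmptyElim i
  N := fun i _ => isEmptyElim i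
  V := fun p => {_u | p ∈ b.V}

/-- Truth lemma for the degenerate case of an empty agent set. -/
lemma sat_empty [IsEmpty Agt] {b : MABase Agt} {Cxt : Set (MABase Agt)} :
    ∀ ψ : Frm Agt, ∀ u : (unitModel b).W, msat Cxt b ψ ↔ (unitModel b).sat u ψ := by
  intro ψ
  induction ψ with
  | atom p => intro u; simp [PreNDM.sat, msat, unitModel]; exact Iff.rfl
  | neg ψ ih =>
      intro u
      simp only [PreNDM.sat, msat]
      rw [ih u]
  | and ψ1 ψ2 ih1 ih2 =>
      intro u
      simp only [PreNDM.sat, msat]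
      rw [ih1 u, ih2 u]
  | expbel i _ _ => exact isEmptyElim i
  | impbel i _ _ => exact isEmptyElim i

end AuxSat

/-- A formula `φ ∈ L` is satisfiable for the class of consistent multi-agent belief
models (CMABs) iff it is satisfiable for the class of notional doxastic models. -/
theorem cmab_iff_ndm_sat (Agt : Type) [Fintype Agt] (φ : Frm Agt) (hφ : φ.isL) :
    (∃ (b : MABase Agt) (Cxt : Set (MABase Agt)), isCMAB b Cxt ∧ msat Cxt b φ) ↔
      (∃ M : PreNDM Agt, isNDM M ∧ ∃ w : M.W, M.sat w φ) := by
  constructor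
  · rintro ⟨b, Cxt, ⟨hwf, hser⟩, hsat⟩
    rcases isEmpty_or_nonempty Agt with hAgt | ⟨⟨i0⟩⟩
    · -- empty agent set: single-world model
      refine ⟨unitModel b,
        ⟨fun i => isEmptyElim i, fun i => isEmptyElim i, fun i => isEmptyElim i⟩,
        ⟨(), ?_⟩⟩
      exact (sat_empty φ ()).mp hsat
    · refine ⟨M' i0 (fsize φ) b Cxt, ⟨?_, ?_, ?_⟩, ⟨b, Set.mem_insert _ _⟩, ?_⟩
      · -- D consists of L0 formulas
        rintro i v α (((⟨h1, _⟩ | ⟨β, hβ, rfl⟩) | rfl) |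
          ⟨_, (⟨β, hβL, _, rfl⟩ | ⟨_, rfl⟩)⟩)
        · exact hwf v.1 v.2 i α h1
        · exact isL0_taut0 (isL0_ait (hwf v.1 v.2 i β hβ))
        · exact isL0_taut0 (isL0_ait trivial)
        · exact isL0_taut0 (isL0_ait hβL)
        · exact isL0_taut0 (isL0_ait trivial)
      · exact N_char hwf
      · intro i v
        obtain ⟨b'', hb'', hR⟩ := hser i v.1 v.2
        exact ⟨⟨b'', Set.mem_insert_of_mem _ hb''⟩, hb'', hR⟩
      · exact (sat_main φ hφ le_rfl ⟨b, Set.mem_insert _ _⟩).mp hsat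
  · rintro ⟨M, ⟨hD, hN1, hN2⟩, w, hw⟩
    set β : M.W → MABase Agt := fun v => ⟨fun i => M.D i v, {p | v ∈ M.V p}⟩ with hβ
    have L1 : ∀ α : Frm Agt, α.isL0 → ∀ v : M.W, M.sat v α ↔ (β v).bsat α := by
      intro α
      induction α with
      | atom p => intro _ v; simp [PreNDM.sat, MABase.bsat, hβ]
      | neg α ih =>
          intro hL v
          simp only [PreNDM.sat, MABase.bsat]
          rw [ih hL v]
      | and α γ ih1 ih2 =>
          intro hL v
          simp only [PreNDM.sat, MABase.bsat]
          rw [ih1 hL.1 v, ih2 hL.2 v]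
      | expbel i α _ => intro _ v; simp [PreNDM.sat, MABase.bsat, hβ]
      | impbel i α _ => intro hL; exact absurd hL id
    have L2 : ∀ (i : Agt) (v u : M.W), MABase.R i (β v) (β u) ↔ u ∈ M.N i v := by
      intro i v u
      rw [hN1 i v]
      constructor
      · intro h α hα
        exact (L1 α (hD i v α hα) u).mpr (h α hα)
      · intro h α hα
        exact (L1 α (hD i v α hα) u).mp (h α hα)
    have L3 : ∀ ψ : Frm Agt, ψ.isL → ∀ v : M.W,
        msat (Set.range β) (β v) ψ ↔ M.sat v ψ := by
      intro ψ
      induction ψ with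
      | atom p => intro _ v; simp [PreNDM.sat, msat, hβ]
      | neg ψ ih =>
          intro hL v
          simp only [PreNDM.sat, msat]
          rw [ih hL v]
      | and ψ1 ψ2 ih1 ih2 =>
          intro hL v
          simp only [PreNDM.sat, msat]
          rw [ih1 hL.1 v, ih2 hL.2 v]
      | expbel i α _ => intro _ v; simp [PreNDM.sat, msat, hβ]
      | impbel i ψ ih =>
          intro hL v
          simp only [PreNDM.sat, msat]
          constructor
          · rintro h u hu
            exact (ih hL u).mp (h (β u) ⟨u, rfl⟩ ((L2 i v u).mpr hu))
          · rintro h b' ⟨u, rfl⟩ hR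
            exact (ih hL u).mpr (h u ((L2 i v u).mp hR))
    refine ⟨β w, Set.range β, ⟨?_, ?_⟩, (L3 φ hφ w).mpr hw⟩
    · intro b' hb'
      have hv : ∃ v : M.W, b' = β v := by
        rcases hb' with rfl | ⟨v, rfl⟩
        · exact ⟨w, rfl⟩
        · exact ⟨v, rfl⟩
      obtain ⟨v, rfl⟩ := hv
      intro i α hα
      exact hD i v α hα
    · intro i b' hb'
      have hv : ∃ v : M.W, b' = β v := by
        rcases hb' with rfl | ⟨v, rfl⟩
        · exact ⟨w, rfl⟩
        · exact ⟨v, rfl⟩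
      obtain ⟨v, rfl⟩ := hv
      obtain ⟨u, hu⟩ := hN2 i v
      exact ⟨β u, ⟨u, rfl⟩, (L2 i v u).mpr hu⟩

end LDAPaper
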